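/- Let d be an even integer with q ≡ -1 (mod d), q ≡ 1 (mod 4), and gcd((q+1)/d, d) = 1. Let c ∈ F_{q^2} satisfy (c/2)^{(q+1)/2} = 1, let k be an odd integer, v = (q+1)/d, v_1 = (d-1)v, and h(x) = c + x^{v_1+k} + x^{qv+k}. Then f(x) = x^r h(x^{q-1}) is a permutation polynomial of F_{q^2} if and only if gcd(r-k, (q+1)/d) = 1, gcd(r, q-1) = 1, and gcd(s+r-k, d) = 1, where s is the integer with 1 ≤ s ≤ d and s ≡ (q+1)/d (mod d). -/

import Mathlib

lemma auxH {F : Type*} [Field F] (m : ℕ) (c t : F) (h2 : (2:F) ≠ 0)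
    (hm : m % 2 = 1) (hcm : (c/2)^m = 1) (ht : t^m = 1) : c + 2*t ≠ 0 := by
  intro h
  have htv : t = -(c/2) := by field_simp; linear_combination h
  have h1 : (1:F) = -1 := by
    calc (1:F) = t ^ m := ht.symm
    _ = (-(c/2))^m := by rw [htv]
    _ = -((c/2)^m) := Odd.neg_pow (Nat.odd_iff.mpr hm) _
    _ = -1 := by rw [hcm]
  exact h2 (by linear_combination h1)

lemma auxHpow {F : Type*} [Field F] (q : ℕ) (hq1 : 1 ≤ q) (c t : F) (hc0 : c ≠ 0)
    (ht0 : t ≠ 0) (hH : c + 2*t ≠ 0) (hcq : c^q * c = 4) (htq : t^q * t = 1)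
    (hfrob : (c + 2*t)^q = c^q + (2*t)^q) (h2q : (2:F)^q = 2) :
    (c + 2*t)^(q-1) = 2 * c⁻¹ * t⁻¹ := by
  have e1 : (c+2*t)^(q-1) * (c+2*t) = (c+2*t)^q := by
    rw [← pow_succ, Nat.sub_add_cancel hq1]
  have e2 : (c+2*t)^q * (c*t) = 2*(c+2*t) := by
    rw [hfrob, mul_pow, h2q]
    linear_combination t*hcq + 2*c*htq
  have key : (c+2*t)^(q-1) * ((c+2*t)*(c*t)) = (2*c⁻¹*t⁻¹) * ((c+2*t)*(c*t)) := by
    calc (c+2*t)^(q-1) * ((c+2*t)*(c*t)) = ((c+2*t)^(q-1) * (c+2*t)) * (c*t) := by ring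
    _ = 2*(c+2*t) := by rw [e1, e2]
    _ = (2*c⁻¹*t⁻¹) * ((c+2*t)*(c*t)) := by field_simp
  exact mul_right_cancel₀ (mul_ne_zero hH (mul_ne_zero hc0 ht0)) key

lemma auxNT (q d v s r k : ℕ) (hdv : (d:ℤ)*(v:ℤ) = (q:ℤ)+1) (hsv : (d:ℤ) ∣ (v:ℤ) - (s:ℤ)) :
    Int.gcd ((r:ℤ) - ((d:ℤ)-1)*(v:ℤ) - (k:ℤ)) ((q:ℤ)+1) = 1 ↔
      (Int.gcd ((r:ℤ)-(k:ℤ)) (v:ℤ) = 1 ∧ Int.gcd ((s:ℤ)+(r:ℤ)-(k:ℤ)) (d:ℤ) = 1) := by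
  have hiff : ∀ (a b z : ℤ), (IsCoprime (a + b*z) b ↔ IsCoprime a b) :=
    fun a b z => ⟨IsCoprime.of_add_mul_left_left, fun h => h.add_mul_left_left z⟩
  rw [← Int.isCoprime_iff_gcd_eq_one, ← Int.isCoprime_iff_gcd_eq_one,
    ← Int.isCoprime_iff_gcd_eq_one, ← hdv, IsCoprime.mul_right_iff]
  obtain ⟨w, hw⟩ := hsv
  have hEd : (r:ℤ) - ((d:ℤ)-1)*(v:ℤ) - (k:ℤ) = ((s:ℤ)+(r:ℤ)-(k:ℤ)) + (d:ℤ)*(w - (v:ℤ)) := by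
    linear_combination hw
  have hEv : (r:ℤ) - ((d:ℤ)-1)*(v:ℤ) - (k:ℤ) = ((r:ℤ)-(k:ℤ)) + (v:ℤ)*(1-(d:ℤ)) := by ring
  constructor
  · rintro ⟨hd1, hv1⟩
    constructor
    · rw [hEv] at hv1; exact (hiff _ _ _).mp hv1
    · rw [hEd] at hd1; exact (hiff _ _ _).mp hd1
  · rintro ⟨hv1, hd1⟩
    constructor
    · rw [hEd]; exact (hiff _ _ _).mpr hd1
    · rw [hEv]; exact (hiff _ _ _).mpr hv1

set_option maxHeartbeats 2000000 in
theorem stmt6 (p pn q : ℕ) (hp : p.Prime) (hpn : 0 < pn) (hq : q = p ^ pn)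
    (F : Type*) [Field F] [Fintype F] (hF : Fintype.card F = q ^ 2)
    (d : ℕ) (hdeven : Even d) (hd : 0 < d) (hdvd : d ∣ q + 1) (hq4 : q % 4 = 1)
    (hcop : Nat.gcd ((q + 1) / d) d = 1)
    (c : F) (hc : (c / 2) ^ ((q + 1) / 2) = 1)
    (k : ℕ) (hk : Odd k) (r : ℕ)
    (s : ℕ) (hs1 : 1 ≤ s) (hsd : s ≤ d) (hsmod : s % d = ((q + 1) / d) % d) :
    Function.Bijective (fun x : F => x ^ r *
      (c + (x ^ (q - 1)) ^ ((d - 1) * ((q + 1) / d) + k)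
         + (x ^ (q - 1)) ^ (q * ((q + 1) / d) + k))) ↔
      (Int.gcd ((r : ℤ) - k) (((q + 1) / d : ℕ) : ℤ) = 1 ∧
        Nat.gcd r (q - 1) = 1 ∧
        Int.gcd ((s : ℤ) + r - k) (d : ℤ) = 1) := by
  classical
  -- numeric preliminaries
  have hq2 : 2 ≤ q := by subst hq; exact Nat.one_lt_pow hpn.ne' hp.one_lt
  have hq5 : 5 ≤ q := by omega
  set v := (q+1)/d with hvdef
  have hdv : d * v = q + 1 := Nat.mul_div_cancel' hdvd
  obtain ⟨d2, hd2'⟩ := hdeven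
  have hd2 : 2 ≤ d := by omega
  have hvpos : 0 < v := by
    rcases Nat.eq_zero_or_pos v with h | h
    · rw [h, Nat.mul_zero] at hdv; omega
    · exact h
  have hvodd : v % 2 = 1 := by
    rcases Nat.even_or_odd v with he | ho
    · obtain ⟨v2, hv2⟩ := he
      have h4 : 4 * (d2 * v2) = q + 1 := by rw [← hdv, hd2', hv2]; ring
      omega
    · exact Nat.odd_iff.mp ho
  set m := (q+1)/2 with hmdef
  have h2m : 2 * m = q + 1 := by omega
  have hmodd : m % 2 = 1 := by omega
  set v1 := (d-1) * v with hv1def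
  have hk1 : 1 ≤ k := hk.pos
  have hv1odd : v1 % 2 = 1 := by
    have h := Nat.mul_mod (d-1) v 2
    have hd1odd : (d-1) % 2 = 1 := by omega
    rw [hd1odd, hvodd] at h
    omega
  have hko : k % 2 = 1 := Nat.odd_iff.mp hk
  have hv1k : (v1 + k) % 2 = 0 := by omega
  -- characteristic
  haveI hcharF : CharP F p := by
    set p' := ringChar F with hp'
    haveI : CharP F p' := ringChar.charP F
    obtain ⟨n, hp'prime, hcard⟩ := FiniteField.card F p'
    have hpq : p' = p := by
      have h1 : p' ∣ p ^ (pn * 2) := by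
        have h2 : p' ∣ p' ^ (n : ℕ) := dvd_pow_self _ n.pos.ne'
        rw [← hcard, hF, hq, ← pow_mul] at h2
        exact h2
      exact (Nat.prime_dvd_prime_iff_eq hp'prime hp).mp (hp'prime.dvd_of_dvd_pow h1)
    rw [← hpq]; infer_instance
  haveI : Fact p.Prime := ⟨hp⟩
  have hpne2 : p ≠ 2 := by
    intro h
    subst h
    have : 2 ∣ q := hq ▸ dvd_pow_self 2 hpn.ne'
    obtain ⟨w, hw⟩ := this
    omega
  have h2F : (2:F) ≠ 0 := by
    intro h
    have h2 : ((2:ℕ):F) = 0 := by exact_mod_cast h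
    have := (CharP.cast_eq_zero_iff F p 2).mp h2
    have := Nat.le_of_dvd (by norm_num) this
    have := hp.two_le
    omega
  have hfrob : ∀ a b : F, (a + b)^q = a^q + b^q := by
    intro a b; rw [hq]; exact add_pow_char_pow a b p pn
  have h2q : (2:F)^q = 2 := by
    have h := hfrob 1 1
    norm_num at h
    exact h
  have hc20 : c/2 ≠ 0 := by
    intro h
    rw [h, zero_pow (by omega : m ≠ 0)] at hc
    exact zero_ne_one hc
  have hc0 : c ≠ 0 := by
    intro h; exact hc20 (by rw [h]; simp)
  have hcq1 : (c/2)^(q+1) = 1 := by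
    rw [← h2m, mul_comm, pow_mul, hc, one_pow]
  have hcq : c^q * c = 4 := by
    have hcc : c^(q+1) = 2^(q+1) := by
      rw [div_pow] at hcq1
      field_simp at hcq1
      exact hcq1
    calc c^q * c = c^(q+1) := (pow_succ c q).symm
    _ = 2^(q+1) := hcc
    _ = 2^q * 2 := pow_succ 2 q
    _ = 4 := by rw [h2q]; norm_num
  -- units group
  have cardU : Fintype.card Fˣ = q^2 - 1 := by rw [Fintype.card_units, hF]
  have hNatU : Nat.card Fˣ = q^2 - 1 := by rw [Nat.card_eq_fintype_card, cardU]
  have hU1 : ∀ x : Fˣ, x ^ (q^2 - 1) = 1 := fun x => cardU ▸ pow_card_eq_one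
  have hNN : (q-1) * (q+1) = q^2 - 1 := by
    obtain ⟨n, rfl⟩ : ∃ n, q = n+1 := ⟨q-1, by omega⟩
    have h1 : (n+1)^2 = n*(n+2)+1 := by ring
    rw [h1]
    simp
  have hUq1 : ∀ x : Fˣ, (x^(q-1))^(q+1) = 1 := fun x => by
    rw [← pow_mul, hNN]; exact hU1 x
  have hTq1 : ∀ x : Fˣ, ((x^(q-1))^(v1+k))^(q+1) = 1 := fun x => by
    rw [← pow_mul, mul_comm (v1+k) (q+1), pow_mul, hUq1, one_pow]
  have hTm : ∀ x : Fˣ, ((x^(q-1))^(v1+k))^m = 1 := by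
    intro x
    obtain ⟨w, hw⟩ : 2 ∣ v1 + k := by omega
    have he : (v1+k) * m = (q+1) * w := by rw [hw, ← h2m]; ring
    rw [← pow_mul, he, pow_mul, hUq1, one_pow]
  have hH0 : ∀ x : Fˣ, c + 2 * (((x^(q-1))^(v1+k) : Fˣ) : F) ≠ 0 := by
    intro x
    refine auxH m c _ h2F hmodd hc ?_
    rw [← Units.val_pow_eq_pow_val, hTm x, Units.val_one]
  set Hu : Fˣ → Fˣ := fun x => Units.mk0 _ (hH0 x) with hHu
  have hHuval : ∀ x : Fˣ, ((Hu x : Fˣ) : F) = c + 2 * (((x^(q-1))^(v1+k) : Fˣ) : F) :=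
    fun x => rfl
  -- f(x) on units
  have hfeq : ∀ x : Fˣ, (x:F)^r * (c + ((x:F) ^ (q - 1)) ^ (v1 + k)
      + ((x:F) ^ (q - 1)) ^ (q * v + k)) = ((x^r * Hu x : Fˣ) : F) := by
    intro x
    have e1 : ((x:F)^(q-1))^(v1+k) = (((x^(q-1))^(v1+k) : Fˣ) : F) := by
      push_cast
      ring
    have hexp : q*v + k = (v1+k) + (q+1)*(v-1) := by
      have h1 : d*v = q+1 := hdv
      zify [hvpos, show 1 ≤ d from by omega, hv1def]
      push_cast [hv1def, Nat.cast_sub (show 1 ≤ d from by omega), Nat.cast_sub hvpos]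
      linear_combination -(by exact_mod_cast h1 : (d:ℤ)*(v:ℤ) = (q:ℤ)+1)
    have e2 : ((x:F)^(q-1))^(q*v+k) = (((x^(q-1))^(v1+k) : Fˣ) : F) := by
      have : (x^(q-1))^(q*v+k) = (x^(q-1))^(v1+k) := by
        rw [hexp, pow_add, pow_mul, hUq1, one_pow, mul_one]
      rw [← this]
      push_cast
      ring
    rw [e1, e2, Units.val_mul, hHuval, Units.val_pow_eq_pow_val]
    push_cast
    ring
  have hC0 : (2:F)*c⁻¹ ≠ 0 := mul_ne_zero h2F (inv_ne_zero hc0)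
  set C2 : Fˣ := Units.mk0 ((2:F)*c⁻¹) hC0 with hC2
  have hHpow : ∀ x : Fˣ, (Hu x)^(q-1) = C2 * ((x^(q-1))^(v1+k))⁻¹ := by
    intro x
    apply Units.ext
    set T : Fˣ := (x^(q-1))^(v1+k) with hT
    have hTF : ((T:Fˣ):F)^q * ((T:Fˣ):F) = 1 := by
      have : ((T:Fˣ):F)^(q+1) = 1 := by
        rw [← Units.val_pow_eq_pow_val, hTq1 x, Units.val_one]
      rw [← this]
      rw [pow_succ]
    have hfr : (c + 2*((T:Fˣ):F))^q = c^q + (2*((T:Fˣ):F))^q := hfrob c _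
    have := auxHpow q (by omega) c ((T:Fˣ):F) hc0 (Units.ne_zero T) (hH0 x) hcq hTF hfr h2q
    rw [Units.val_pow_eq_pow_val, hHuval, this]
    rw [Units.val_mul, Units.val_inv_eq_inv_val]
    rfl
  -- E and unit power identity
  set E : ℤ := (r:ℤ) - (v1:ℤ) - (k:ℤ) with hEdef
  have hzpow : ∀ u : Fˣ, u^r * (u^(v1+k))⁻¹ = u^E := by
    intro u
    have huv : u^(v1+k) = u^((v1:ℤ)+(k:ℤ)) := by
      rw [← zpow_natCast u (v1+k)]; norm_cast
    rw [huv, hEdef, show (r:ℤ) - (v1:ℤ) - (k:ℤ) = (r:ℤ) - ((v1:ℤ) + (k:ℤ)) from by ring,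
      zpow_sub, zpow_natCast]
  have hFpow : ∀ x : Fˣ, (x^r * Hu x)^(q-1) = C2 * (x^(q-1))^E := by
    intro x
    rw [mul_pow, hHpow x, ← pow_mul, mul_comm r (q-1), pow_mul, mul_comm,
      mul_assoc, mul_comm (((x^(q-1))^(v1+k))⁻¹) ((x^(q-1))^r), hzpow (x^(q-1))]
  -- generator
  obtain ⟨ζ, hζ⟩ := IsCyclic.exists_generator (α := Fˣ)
  have hordζ : orderOf ζ = q^2 - 1 := by
    rw [orderOf_eq_card_of_forall_mem_zpowers hζ, hNatU]
  have hq21 : 0 < q^2 - 1 := hNN ▸ Nat.mul_pos (by omega) (by omega)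
  have hζne1 : ∀ n : ℕ, 0 < n → n < q^2-1 → ζ^n ≠ 1 := by
    intro n hn1 hn2 h
    have h2 := orderOf_dvd_of_pow_eq_one h
    rw [hordζ] at h2
    have := Nat.le_of_dvd hn1 h2
    omega
  have hT1 : ∀ x : Fˣ, x^(q-1) = 1 → Hu x = Hu 1 := by
    intro x hx
    apply Units.ext
    rw [hHuval, hHuval, hx]
    simp
  have hdvZ : (d:ℤ)*(v:ℤ) = (q:ℤ)+1 := by exact_mod_cast hdv
  have hsv : (d:ℤ) ∣ (v:ℤ) - (s:ℤ) := Nat.ModEq.dvd hsmod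
  have hEeq : E = (r:ℤ) - ((d:ℤ)-1)*(v:ℤ) - (k:ℤ) := by
    rw [hEdef]
    have : (v1:ℤ) = ((d:ℤ)-1)*(v:ℤ) := by
      rw [hv1def]
      push_cast [Nat.cast_sub (show 1 ≤ d from by omega)]
      ring
    rw [this]
  constructor
  · intro hbij
    have hinj := hbij.injective
    -- (i) gcd(r, q-1) = 1
    have hr : Nat.gcd r (q-1) = 1 := by
      by_contra hne
      set g := Nat.gcd r (q-1) with hg
      have hgq : g ∣ q-1 := Nat.gcd_dvd_right _ _
      have hgr : g ∣ r := Nat.gcd_dvd_left _ _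
      have hgpos : 0 < g := Nat.gcd_pos_of_pos_right _ (by omega)
      have hg2 : 2 ≤ g := by omega
      have hgdvd : g ∣ q^2-1 := hgq.trans ⟨q+1, hNN.symm⟩
      obtain ⟨w, hw⟩ := hgq
      obtain ⟨wr, hwr⟩ := hgr
      set α : Fˣ := ζ^((q^2-1)/g) with hα
      have hdivpos : 0 < (q^2-1)/g := Nat.div_pos (Nat.le_of_dvd hq21 hgdvd) hgpos
      have hdivlt : (q^2-1)/g < q^2-1 := Nat.div_lt_self hq21 hg2
      have hα1 : α ≠ 1 := fun h => hζne1 _ hdivpos hdivlt h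
      have hαq : α^(q-1) = 1 := by
        rw [hα, ← pow_mul]
        have hqg : q^2-1 = g*(w*(q+1)) := by rw [← hNN, hw]; ring
        have hdg : (q^2-1)/g = w*(q+1) := by
          rw [hqg, Nat.mul_div_cancel_left _ hgpos]
        rw [hdg, show w*(q+1)*(q-1) = (q^2-1)*w from by rw [← hNN]; ring, pow_mul,
          hU1, one_pow]
      have hαr : α^r = 1 := by
        rw [hα, ← pow_mul]
        have hd2' : (q^2-1)/g * r = (q^2-1) * wr := by
          rw [hwr, ← mul_assoc, Nat.div_mul_cancel hgdvd]
        rw [hd2', pow_mul, hU1, one_pow]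
      have heq : (α:F) = ((1:Fˣ):F) := by
        apply hinj
        show (α:F) ^ r * (c + ((α:F) ^ (q - 1)) ^ (v1 + k) + ((α:F) ^ (q - 1)) ^ (q * v + k))
          = ((1:Fˣ):F) ^ r * (c + (((1:Fˣ):F) ^ (q - 1)) ^ (v1 + k)
            + (((1:Fˣ):F) ^ (q - 1)) ^ (q * v + k))
        rw [hfeq α, hfeq 1, hαr, hT1 α hαq, one_pow]
      exact hα1 (Units.ext heq)
    -- (ii) gcd(E, q+1) = 1
    have hE1 : Int.gcd E ((q:ℤ)+1) = 1 := by
      by_contra hne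
      set g := Int.gcd E ((q:ℤ)+1) with hg
      have hgq' : (g:ℤ) ∣ ((q:ℤ)+1) := Int.gcd_dvd_right _ _
      have hgE : (g:ℤ) ∣ E := Int.gcd_dvd_left _ _
      have hgq : g ∣ q+1 := by exact_mod_cast hgq'
      have hgpos : 0 < g := by
        rcases Nat.eq_zero_or_pos g with h|h
        · exfalso
          have h2 := (Int.gcd_eq_zero_iff.mp (hg ▸ h)).2
          omega
        · exact h
      have hg2 : 2 ≤ g := by omega
      obtain ⟨w, hw⟩ := hgq
      have hwpos : 0 < w := by
        rcases Nat.eq_zero_or_pos w with h|h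
        · rw [h, mul_zero] at hw; omega
        · exact h
      set x : Fˣ := ζ^w with hx
      have hβ : x^(q-1) = ζ^(w*(q-1)) := by rw [hx, ← pow_mul]
      have hwlt : w < q+1 := by
        have h2w : 2*w ≤ q+1 := by rw [hw]; exact Nat.mul_le_mul_right w hg2
        omega
      have hβ1 : x^(q-1) ≠ 1 := by
        rw [hβ]
        apply hζne1
        · exact Nat.mul_pos hwpos (by omega)
        · calc w*(q-1) < (q+1)*(q-1) := mul_lt_mul_of_pos_right hwlt (by omega)
          _ = q^2-1 := by rw [← hNN]; ring
      obtain ⟨E', hE'⟩ := hgE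
      have hβE : (x^(q-1) : Fˣ)^E = 1 := by
        rw [hβ, ← zpow_natCast ζ (w*(q-1)), ← zpow_mul]
        have hwZ : (q:ℤ)+1 = (g:ℤ)*(w:ℤ) := by exact_mod_cast hw
        have hcast : (↑(w*(q-1)) : ℤ) * E = ((q^2-1 : ℕ) : ℤ) * E' := by
          push_cast [hE', Nat.cast_sub (show 1 ≤ q from by omega),
            Nat.cast_sub (show 1 ≤ q^2 from Nat.one_le_pow _ _ (by omega))]
          linear_combination (1-(q:ℤ))*E'*hwZ
        rw [hcast, zpow_mul, zpow_natCast, hU1, one_zpow]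
      set γ : Fˣ := (x^r * Hu x) * ((1:Fˣ)^r * Hu 1)⁻¹ with hγ
      have hγq : γ^(q-1) = 1 := by
        have hh1 : (x^r * Hu x)^(q-1) = C2 := by rw [hFpow x, hβE, mul_one]
        have hh2 : ((1:Fˣ)^r * Hu 1)^(q-1) = C2 := by
          rw [hFpow 1, one_pow, one_zpow, mul_one]
        rw [hγ, mul_pow, inv_pow, hh1, hh2, mul_inv_cancel]
      obtain ⟨a, b, hab⟩ := (Int.isCoprime_iff_gcd_eq_one.mpr
        (by rw [Int.gcd_natCast_natCast]; exact hr) : IsCoprime (r:ℤ) ((q-1:ℕ):ℤ))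
      set γ' : Fˣ := γ^a with hγ'
      have hγ'q : γ'^(q-1) = 1 := by
        rw [hγ', ← zpow_natCast (γ^a) (q-1), ← zpow_mul, mul_comm, zpow_mul,
          zpow_natCast, hγq, one_zpow]
      have hγ'r : γ'^r = γ := by
        rw [hγ', ← zpow_natCast (γ^a) r, ← zpow_mul]
        have hh : a * (r:ℤ) = 1 - ((q-1:ℕ):ℤ) * b := by linarith [hab]
        rw [hh, zpow_sub, zpow_one, zpow_mul, zpow_natCast, hγq, one_zpow, inv_one,
          mul_one]
      have heq : (γ':F) = (x:F) := by
        apply hinj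
        show (γ':F) ^ r * (c + ((γ':F) ^ (q - 1)) ^ (v1 + k) + ((γ':F) ^ (q - 1)) ^ (q * v + k))
          = (x:F) ^ r * (c + ((x:F) ^ (q - 1)) ^ (v1 + k) + ((x:F) ^ (q - 1)) ^ (q * v + k))
        rw [hfeq γ', hfeq x, hγ'r, hT1 γ' hγ'q, hγ]
        congr 1
        rw [one_pow]
        group
      have : x^(q-1) = 1 := by rw [← Units.ext heq, hγ'q]
      exact hβ1 this
    have hnt := (auxNT q d v s r k hdvZ hsv).mp (by rw [← hEeq]; exact hE1)
    exact ⟨hnt.1, hr, hnt.2⟩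
  · rintro ⟨h1, hr, h3⟩
    have hE1 : Int.gcd E ((q:ℤ)+1) = 1 := by
      rw [hEeq]
      exact (auxNT q d v s r k hdvZ hsv).mpr ⟨h1, h3⟩
    have hrpos : 1 ≤ r := by
      rcases Nat.eq_zero_or_pos r with h|h
      · rw [h, Nat.gcd_zero_left] at hr; omega
      · exact h
    rw [← Finite.injective_iff_bijective]
    intro a b hab
    simp only at hab
    by_cases ha : a = 0
    · by_cases hb : b = 0
      · rw [ha, hb]
      · exfalso
        set y : Fˣ := Units.mk0 b hb with hy
        have eb : b ^ r * (c + (b ^ (q - 1)) ^ (v1 + k) + (b ^ (q - 1)) ^ (q*v + k))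
            = ((y^r * Hu y : Fˣ) : F) := hfeq y
        rw [ha, zero_pow (show r ≠ 0 from by omega), zero_mul, eb] at hab
        exact (Units.ne_zero _) hab.symm
    · by_cases hb : b = 0
      · exfalso
        set x : Fˣ := Units.mk0 a ha with hx
        have ea : a ^ r * (c + (a ^ (q - 1)) ^ (v1 + k) + (a ^ (q - 1)) ^ (q*v + k))
            = ((x^r * Hu x : Fˣ) : F) := hfeq x
        rw [hb, zero_pow (show r ≠ 0 from by omega), zero_mul, ea] at hab
        exact (Units.ne_zero _) hab
      · set x : Fˣ := Units.mk0 a ha with hx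
        set y : Fˣ := Units.mk0 b hb with hy
        have ea : a ^ r * (c + (a ^ (q - 1)) ^ (v1 + k) + (a ^ (q - 1)) ^ (q*v + k))
            = ((x^r * Hu x : Fˣ) : F) := hfeq x
        have eb : b ^ r * (c + (b ^ (q - 1)) ^ (v1 + k) + (b ^ (q - 1)) ^ (q*v + k))
            = ((y^r * Hu y : Fˣ) : F) := hfeq y
        rw [ea, eb] at hab
        have huv : x^r * Hu x = y^r * Hu y := Units.ext hab
        have h2 : C2 * (x^(q-1))^E = C2 * (y^(q-1))^E := by
          rw [← hFpow x, ← hFpow y, huv]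
        have h3' : (x^(q-1))^E = (y^(q-1))^E := mul_left_cancel h2
        set wu : Fˣ := x^(q-1) * (y^(q-1))⁻¹ with hwu
        have hw1 : wu^E = 1 := by
          rw [hwu, mul_zpow, inv_zpow, h3', mul_inv_cancel]
        have hw2 : wu^(q+1) = 1 := by
          rw [hwu, mul_pow, inv_pow, hUq1 x, hUq1 y, inv_one, mul_one]
        have ho1 : (orderOf wu : ℤ) ∣ E := orderOf_dvd_iff_zpow_eq_one.mpr hw1
        have ho2' : (orderOf wu : ℤ) ∣ (q:ℤ)+1 := by
          have := Int.natCast_dvd_natCast.mpr (orderOf_dvd_of_pow_eq_one hw2)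
          push_cast at this
          exact this
        have hdg := Int.dvd_gcd ho1 ho2'
        rw [hE1] at hdg
        have hord1 : orderOf wu = 1 := Nat.dvd_one.mp (by exact_mod_cast hdg)
        have hwone : wu = 1 := orderOf_eq_one_iff.mp hord1
        have hUxy : x^(q-1) = y^(q-1) := by
          rw [hwu] at hwone; exact mul_inv_eq_one.mp hwone
        have hHxy : Hu x = Hu y := Units.ext (by rw [hHuval, hHuval, hUxy])
        have hxr : x^r = y^r := by
          rw [hHxy] at huv; exact mul_right_cancel huv
        set z : Fˣ := x * y⁻¹ with hz
        have hz1 : z^r = 1 := by rw [hz, mul_pow, inv_pow, hxr, mul_inv_cancel]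
        have hz2 : z^(q-1) = 1 := by rw [hz, mul_pow, inv_pow, hUxy, mul_inv_cancel]
        have hoz : orderOf z ∣ Nat.gcd r (q-1) :=
          Nat.dvd_gcd (orderOf_dvd_of_pow_eq_one hz1) (orderOf_dvd_of_pow_eq_one hz2)
        rw [hr] at hoz
        have : z = 1 := orderOf_eq_one_iff.mp (Nat.dvd_one.mp hoz)
        have hxy : x = y := by
          rw [hz] at this; exact mul_inv_eq_one.mp this
        calc a = (x:F) := rfl
        _ = (y:F) := by rw [hxy]
        _ = b := rfl
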